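/- Under Assumption 1, the limit ρ = lim_{k→∞} [S^k d(·,x̄)](x̄)/k exists, is independent of the base point x̄ ∈ X, and satisfies ρ = max{λ ∈ ℝ : ∃ v ∈ Lip₁(X) with λ + v ≤ Sv}; in particular this maximum is attained. -/

import Mathlib

open Set Filter

namespace Stmt3Aux

noncomputable def L (g : ℕ → ℝ) : ℝ := sInf {a | ∀ᶠ k in atTop, g k ≤ a}

/-- running maximum -/
noncomputable def Mseq (g : ℕ → ℝ) (k : ℕ) : ℝ :=
  (Finset.range (k+1)).sup' Finset.nonempty_range_add_one g

lemma le_Mseq (g : ℕ → ℝ) {m k : ℕ} (h : m ≤ k) : g m ≤ Mseq g k :=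
  Finset.le_sup' g (Finset.mem_range.2 (by omega))

lemma Mseq_le (g : ℕ → ℝ) {k : ℕ} {C : ℝ} (h : ∀ m, m ≤ k → g m ≤ C) : Mseq g k ≤ C :=
  Finset.sup'_le _ _ fun m hm => h m (by simpa [Nat.lt_succ_iff] using Finset.mem_range.1 hm)

lemma Mseq_mono (g : ℕ → ℝ) : Monotone (Mseq g) := fun j k hjk =>
  Mseq_le g fun m hm => le_Mseq g (hm.trans hjk)

lemma exists_Mseq_eq (g : ℕ → ℝ) (k : ℕ) : ∃ m, m ≤ k ∧ Mseq g k = g m := by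
  obtain ⟨m, hm, he⟩ := Finset.exists_mem_eq_sup' (Finset.nonempty_range_add_one (n := k)) g
  exact ⟨m, by simpa [Nat.lt_succ_iff] using Finset.mem_range.1 hm, he⟩

lemma freq_ge_M (g : ℕ → ℝ) (hg0 : ∀ k, 0 ≤ g k) :
    ∃ σ : ℝ, ∃ᶠ k in atTop, σ ≤ g k - Mseq g k := by
  by_cases hb : BddAbove (Set.range g)
  · obtain ⟨G, hG⟩ := hb
    refine ⟨-G, Frequently.of_forall fun k => ?_⟩
    have h1 : Mseq g k ≤ G := Mseq_le g fun m _ => hG ⟨m, rfl⟩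
    have h2 := hg0 k
    linarith
  · refine ⟨0, frequently_atTop.2 fun N => ?_⟩
    obtain ⟨y, ⟨k', rfl⟩, hy⟩ := not_bddAbove_iff.1 hb (Mseq g N)
    obtain ⟨m, hmle, hmeq⟩ := exists_Mseq_eq g k'
    have h1 : Mseq g N < g m := hy.trans_le (hmeq ▸ le_Mseq g le_rfl)
    have hmN : N ≤ m := by
      by_contra hc
      exact absurd (le_Mseq g (le_of_not_ge hc : m ≤ N)) (not_le.2 h1)
    have h2 : Mseq g m ≤ g m := hmeq ▸ Mseq_mono g hmle
    exact ⟨m, hmN, by linarith⟩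

lemma bddS {g : ℕ → ℝ} {Cl : ℝ} (hlb : ∃ᶠ k in atTop, Cl ≤ g k) :
    BddBelow {a | ∀ᶠ k in atTop, g k ≤ a} := by
  refine ⟨Cl, fun a ha => ?_⟩
  obtain ⟨k, h1, h2⟩ := (hlb.and_eventually ha).exists
  linarith

lemma L_le {g : ℕ → ℝ} {Cl a : ℝ} (hlb : ∃ᶠ k in atTop, Cl ≤ g k)
    (h : ∀ᶠ k in atTop, g k ≤ a) : L g ≤ a := csInf_le (bddS hlb) h

lemma le_L {g : ℕ → ℝ} {Cu a : ℝ} (hub : ∀ᶠ k in atTop, g k ≤ Cu)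
    (h : ∃ᶠ k in atTop, a ≤ g k) : a ≤ L g := by
  refine le_csInf ⟨Cu, hub⟩ (fun b hb => ?_)
  obtain ⟨k, h1, h2⟩ := (h.and_eventually hb).exists
  linarith

lemma L_mono {g h : ℕ → ℝ} {Cl Cu : ℝ} (hlb : ∃ᶠ k in atTop, Cl ≤ g k)
    (hub : ∀ᶠ k in atTop, h k ≤ Cu) (hgh : ∀ k, g k ≤ h k) : L g ≤ L h := by
  refine le_csInf ⟨Cu, hub⟩ (fun b hb => csInf_le (bddS hlb) ?_)
  exact hb.mono fun k hk => (hgh k).trans hk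

lemma L_add_le {g : ℕ → ℝ} {Cl Cu : ℝ} (hlb : ∃ᶠ k in atTop, Cl ≤ g k)
    (hub : ∀ᶠ k in atTop, g k ≤ Cu) (c : ℝ) : L (fun k => g k + c) ≤ L g + c := by
  have h2 : L (fun k => g k + c) - c ≤ L g := by
    refine le_csInf ⟨Cu, hub⟩ (fun b hb => ?_)
    have : L (fun k => g k + c) ≤ b + c := by
      refine csInf_le (bddS (Cl := Cl + c) ?_) ?_
      · exact hlb.mono fun k hk => add_le_add_left hk c
      · exact hb.mono fun k hk => add_le_add_left hk c
    linarith
  linarith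

lemma L_add_const {g : ℕ → ℝ} {Cl Cu : ℝ} (hlb : ∃ᶠ k in atTop, Cl ≤ g k)
    (hub : ∀ᶠ k in atTop, g k ≤ Cu) (c : ℝ) : L (fun k => g k + c) = L g + c := by
  refine le_antisymm (L_add_le hlb hub c) ?_
  have h1 : L (fun k => (g k + c) + -c) ≤ L (fun k => g k + c) + -c :=
    L_add_le (Cl := Cl + c) (Cu := Cu + c)
      (hlb.mono fun k hk => add_le_add_left hk c)
      (hub.mono fun k hk => add_le_add_left hk c) (-c)
  have h2 : L (fun k => (g k + c) + -c) = L g := by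
    have he : (fun k => (g k + c) + -c) = g := by funext k; ring
    rw [he]
  linarith [h1, h2]

lemma L_shift (g : ℕ → ℝ) : L (fun k => g (k + 1)) = L g := by
  unfold L
  congr 1
  ext a
  simp only [mem_setOf_eq, eventually_atTop]
  constructor
  · rintro ⟨N, hN⟩
    exact ⟨N + 1, fun k hk => by
      have := hN (k - 1) (by omega)
      rwa [Nat.sub_add_cancel (by omega)] at this⟩
  · rintro ⟨N, hN⟩
    exact ⟨N, fun k hk => hN (k + 1) (by omega)⟩

lemma freq_shift {p : ℕ → Prop} (h : ∃ᶠ k in atTop, p k) : ∃ᶠ k in atTop, p (k + 1) := by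
  rw [frequently_atTop] at h ⊢
  intro N
  obtain ⟨m, hm, hp⟩ := h (N + 1)
  exact ⟨m - 1, by omega, by rwa [Nat.sub_add_cancel (by omega)]⟩

lemma iSup_add' {ι : Type*} [Nonempty ι] {f : ι → ℝ} (h : BddAbove (Set.range f)) (c : ℝ) :
    (⨆ i, (f i + c)) = (⨆ i, f i) + c := by
  refine le_antisymm (ciSup_le fun i => add_le_add_left (le_ciSup h i) c) ?_
  have hb : BddAbove (Set.range fun i => f i + c) := by
    obtain ⟨u, hu⟩ := h
    exact ⟨u + c, by rintro _ ⟨i, rfl⟩; exact add_le_add_left (hu ⟨i, rfl⟩) c⟩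
  have : (⨆ i, f i) ≤ (⨆ i, (f i + c)) - c := by
    refine ciSup_le fun i => ?_
    have := le_ciSup hb i
    linarith
  linarith

lemma iInf_add' {ι : Type*} [Nonempty ι] {f : ι → ℝ} (h : BddBelow (Set.range f)) (c : ℝ) :
    (⨅ i, (f i + c)) = (⨅ i, f i) + c := by
  refine le_antisymm ?_ (le_ciInf fun i => add_le_add_left (ciInf_le h i) c)
  have hb : BddBelow (Set.range fun i => f i + c) := by
    obtain ⟨u, hu⟩ := h
    exact ⟨u + c, by rintro _ ⟨i, rfl⟩; exact add_le_add_left (hu ⟨i, rfl⟩) c⟩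
  have : (⨅ i, (f i + c)) - c ≤ (⨅ i, f i) := by
    refine le_ciInf fun i => ?_
    have := ciInf_le hb i
    linarith
  linarith

end Stmt3Aux

/-- The Shapley operator of the escape rate game:
`S v (x) = inf_{a ∈ 𝒜} sup_{b ∈ ℬ} v (T_{ab}(x))`. -/
noncomputable def shapley {X : Type*} {E : Type*} (A B : Set E)
    (T : E → E → X → X) : (X → ℝ) → X → ℝ :=
  fun v x => ⨅ a : A, ⨆ b : B, v (T a b x)

/-- under Assumption 1, the escape rate
`ρ = lim_k [S^k d(·,x̄)](x̄)/k` exists, is independent of the base point, and is the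
greatest `λ` for which there exists `v ∈ Lip₁(X)` with `λ + v ≤ S v`.
The hemi-metric space `(X, d)` is encoded by a metric space `X` whose distance is
the symmetrization of the hemi-metric `d`. -/
theorem stmt_3 {X : Type*} [MetricSpace X] [Nonempty X] {E : Type*} [MetricSpace E]
    (d : X → X → ℝ)
    (htri : ∀ x y z, d x z ≤ d x y + d y z)
    (hcompat : ∀ x y, dist x y = max (d x y) (d y x))
    (A B : Set E) (hAc : IsCompact A) (hAne : A.Nonempty)
    (hBc : IsCompact B) (hBne : B.Nonempty)
    (T : E → E → X → X)
    (hTnexp : ∀ a ∈ A, ∀ b ∈ B, ∀ x y, d (T a b x) (T a b y) ≤ d x y)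
    (hconta : ∀ x : X, ∀ b ∈ B, ContinuousOn (fun a => T a b x) A)
    (hcontb : ∀ x : X, ∀ a ∈ A, ContinuousOn (fun b => T a b x) B)
    (hcomp : ∀ K : Set X, IsCompact K →
      IsCompact {z | ∃ a ∈ A, ∃ b ∈ B, ∃ x ∈ K, z = T a b x}) :
    ∃ ρ : ℝ,
      (∀ xb : X, Tendsto
        (fun k : ℕ => (shapley A B T)^[k] (fun y => d y xb) xb / (k : ℝ))
        atTop (nhds ρ)) ∧
      IsGreatest {l : ℝ | ∃ v : X → ℝ, (∀ x y, v x - v y ≤ d x y) ∧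
        ∀ x, l + v x ≤ shapley A B T v x} ρ := by
  classical
  haveI hAnt : Nonempty ↥A := hAne.to_subtype
  haveI hBnt : Nonempty ↥B := hBne.to_subtype
  obtain ⟨b0, hb0⟩ := id hBne
  obtain ⟨a0, ha0⟩ := id hAne
  set x0 : X := Classical.arbitrary X with hx0
  -- basic facts about d
  have hd0 : ∀ x : X, d x x = 0 := by
    intro x
    have h := hcompat x x
    rw [dist_self, max_self] at h
    exact h.symm
  have hdd : ∀ x y : X, d x y ≤ dist x y := fun x y => (hcompat x y) ▸ le_max_left _ _
  -- Lipschitz functions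
  have habs : ∀ (v : X → ℝ), (∀ x y, v x - v y ≤ d x y) → ∀ x y, |v x - v y| ≤ dist x y := by
    intro v hv x y
    rw [abs_sub_le_iff]
    exact ⟨(hv x y).trans (hdd x y), (hv y x).trans ((hdd y x).trans_eq (dist_comm y x))⟩
  have hlipW : ∀ (v : X → ℝ), (∀ x y, v x - v y ≤ d x y) → Continuous v := by
    intro v hv
    refine (LipschitzWith.of_dist_le_mul (K := 1) fun x y => ?_).continuous
    simp only [NNReal.coe_one, one_mul, Real.dist_eq]
    exact habs v hv x y
  -- radius bound on one-step reachable sets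
  have hRex : ∀ x : X, ∃ r : ℝ, 0 ≤ r ∧ ∀ a ∈ A, ∀ b ∈ B, dist x0 (T a b x) ≤ r := by
    intro x
    obtain ⟨r, hr⟩ := ((hcomp {x} isCompact_singleton).isBounded).subset_closedBall x0
    refine ⟨max r 0, le_max_right _ _, fun a ha b hb => ?_⟩
    have hz : T a b x ∈ Metric.closedBall x0 r := hr ⟨a, ha, b, hb, x, rfl, rfl⟩
    calc dist x0 (T a b x) = dist (T a b x) x0 := dist_comm _ _
      _ ≤ r := Metric.mem_closedBall.1 hz
      _ ≤ max r 0 := le_max_left _ _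
  choose R hR0 hRb using hRex
  -- bounds for Lipschitz v on reachable set
  have hvub : ∀ (v : X → ℝ), (∀ x y, v x - v y ≤ d x y) → ∀ (x : X) (a : ↥A) (b : ↥B),
      v (T a b x) ≤ v x0 + R x := by
    intro v hv x a b
    have h1 := (habs v hv (T a b x) x0).trans_eq (dist_comm _ x0)
    have h2 := hRb x a a.2 b b.2
    have := abs_le.1 h1
    linarith [this.2]
  have hvlb : ∀ (v : X → ℝ), (∀ x y, v x - v y ≤ d x y) → ∀ (x : X) (a : ↥A) (b : ↥B),
      v x0 - R x ≤ v (T a b x) := by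
    intro v hv x a b
    have h1 := (habs v hv (T a b x) x0).trans_eq (dist_comm _ x0)
    have h2 := hRb x a a.2 b b.2
    have := abs_le.1 h1
    linarith [this.1]
  have hbA : ∀ (v : X → ℝ), (∀ x y, v x - v y ≤ d x y) → ∀ (x : X) (a : ↥A),
      BddAbove (Set.range fun b : ↥B => v (T a b x)) := by
    intro v hv x a
    exact ⟨v x0 + R x, by rintro _ ⟨b, rfl⟩; exact hvub v hv x a b⟩
  have hsupLB : ∀ (v : X → ℝ), (∀ x y, v x - v y ≤ d x y) → ∀ (x : X) (a : ↥A),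
      v x0 - R x ≤ ⨆ b : ↥B, v (T a b x) := by
    intro v hv x a
    exact (hvlb v hv x a ⟨b0, hb0⟩).trans (le_ciSup (hbA v hv x a) ⟨b0, hb0⟩)
  have hfamLB : ∀ (v : X → ℝ), (∀ x y, v x - v y ≤ d x y) → ∀ (x : X),
      BddBelow (Set.range fun a : ↥A => ⨆ b : ↥B, v (T a b x)) := by
    intro v hv x
    exact ⟨v x0 - R x, by rintro _ ⟨a, rfl⟩; exact hsupLB v hv x a⟩
  have hSle : ∀ (v : X → ℝ), (∀ x y, v x - v y ≤ d x y) → ∀ (x : X) (a : ↥A),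
      shapley A B T v x ≤ ⨆ b : ↥B, v (T a b x) := by
    intro v hv x a
    exact ciInf_le (hfamLB v hv x) a
  have hSmono : ∀ (v w : X → ℝ), (∀ x y, v x - v y ≤ d x y) → (∀ x y, w x - w y ≤ d x y) →
      (∀ z, v z ≤ w z) → ∀ x, shapley A B T v x ≤ shapley A B T w x := by
    intro v w hv hw hvw x
    exact ciInf_mono (hfamLB v hv x) fun a => ciSup_mono (hbA w hw x a) fun b => hvw _
  have hSadd : ∀ (v : X → ℝ), (∀ x y, v x - v y ≤ d x y) → ∀ (c : ℝ) (x : X),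
      shapley A B T (fun y => v y + c) x = shapley A B T v x + c := by
    intro v hv c x
    show (⨅ a : ↥A, ⨆ b : ↥B, (v (T a b x) + c)) = (⨅ a : ↥A, ⨆ b : ↥B, v (T a b x)) + c
    have h1 : ∀ a : ↥A, (⨆ b : ↥B, (v (T a b x) + c)) = (⨆ b : ↥B, v (T a b x)) + c :=
      fun a => Stmt3Aux.iSup_add' (hbA v hv x a) c
    rw [iInf_congr h1]
    exact Stmt3Aux.iInf_add' (hfamLB v hv x) c
  have hSlip : ∀ (v : X → ℝ), (∀ x y, v x - v y ≤ d x y) →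
      ∀ x y, shapley A B T v x - shapley A B T v y ≤ d x y := by
    intro v hv x y
    have h0 : shapley A B T v x ≤ ⨅ a : ↥A, ((⨆ b : ↥B, v (T a b y)) + d x y) := by
      refine le_ciInf fun a => ?_
      refine (hSle v hv x a).trans (ciSup_le fun b => ?_)
      have h1 : v (T a b x) - v (T a b y) ≤ d x y :=
        (hv _ _).trans (hTnexp a a.2 b b.2 x y)
      have h2 := le_ciSup (hbA v hv y a) b
      linarith
    have h3 : (⨅ a : ↥A, ((⨆ b : ↥B, v (T a b y)) + d x y)) = shapley A B T v y + d x y :=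
      Stmt3Aux.iInf_add' (hfamLB v hv y) (d x y)
    linarith
  -- iterates
  have hUlip : ∀ (k : ℕ) (v : X → ℝ), (∀ x y, v x - v y ≤ d x y) →
      ∀ x y, (shapley A B T)^[k] v x - (shapley A B T)^[k] v y ≤ d x y := by
    intro k
    induction k with
    | zero => intro v hv; simpa using hv
    | succ k ih =>
      intro v hv
      rw [Function.iterate_succ_apply]
      exact ih _ (hSlip v hv)
  have hIterMono : ∀ (k : ℕ) (v w : X → ℝ), (∀ x y, v x - v y ≤ d x y) →
      (∀ x y, w x - w y ≤ d x y) → (∀ z, v z ≤ w z) →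
      ∀ z, (shapley A B T)^[k] v z ≤ (shapley A B T)^[k] w z := by
    intro k
    induction k with
    | zero => intro v w _ _ hvw; simpa using hvw
    | succ k ih =>
      intro v w hv hw hvw
      rw [Function.iterate_succ_apply, Function.iterate_succ_apply]
      exact ih _ _ (hSlip v hv) (hSlip w hw) (hSmono v w hv hw hvw)
  have hIterAdd : ∀ (k : ℕ) (v : X → ℝ), (∀ x y, v x - v y ≤ d x y) → ∀ (c : ℝ) (z : X),
      (shapley A B T)^[k] (fun y => v y + c) z = (shapley A B T)^[k] v z + c := by
    intro k
    induction k with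
    | zero => intro v _ c z; rfl
    | succ k ih =>
      intro v hv c z
      rw [Function.iterate_succ_apply, Function.iterate_succ_apply]
      have hfe : shapley A B T (fun y => v y + c) = fun y => shapley A B T v y + c :=
        funext fun y => hSadd v hv c y
      rw [hfe]
      exact ih _ (hSlip v hv) c z
  -- base function is 1-Lipschitz
  have hu0lip : ∀ xb : X, ∀ x y : X, d x xb - d y xb ≤ d x y := by
    intro xb x y; have := htri x y xb; linarith
  -- iterates of the base function
  have hulip : ∀ (xb : X) (k : ℕ) (x y : X),
      (shapley A B T)^[k] (fun y => d y xb) x - (shapley A B T)^[k] (fun y => d y xb) y ≤ d x y :=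
    fun xb k => hUlip k _ (hu0lip xb)
  have huub : ∀ (xb z : X) (k : ℕ), (shapley A B T)^[k] (fun y => d y xb) z ≤
      (shapley A B T)^[k] (fun y => d y xb) xb + d z xb := by
    intro xb z k; have := hulip xb k z xb; linarith
  have hulb : ∀ (xb z : X) (k : ℕ), (shapley A B T)^[k] (fun y => d y xb) xb - d xb z ≤
      (shapley A B T)^[k] (fun y => d y xb) z := by
    intro xb z k; have := hulip xb k xb z; linarith
  -- subadditivity of the sequence s xb
  have hsubadd : ∀ xb : X, Subadditive (fun k => (shapley A B T)^[k] (fun y => d y xb) xb) := by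
    intro xb m n
    have he : (shapley A B T)^[m + n] (fun y => d y xb) =
        (shapley A B T)^[m] ((shapley A B T)^[n] (fun y => d y xb)) :=
      Function.iterate_add_apply _ m n _
    have hrlip : ∀ x y : X, (d x xb + (shapley A B T)^[n] (fun y => d y xb) xb) -
        (d y xb + (shapley A B T)^[n] (fun y => d y xb) xb) ≤ d x y := by
      intro x y; have := hu0lip xb x y; linarith
    have hmono := hIterMono m ((shapley A B T)^[n] (fun y => d y xb))
      (fun z => d z xb + (shapley A B T)^[n] (fun y => d y xb) xb)
      (hulip xb n) hrlip (fun z => by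
        show (shapley A B T)^[n] (fun y => d y xb) z ≤
          d z xb + (shapley A B T)^[n] (fun y => d y xb) xb
        have := huub xb z n; linarith) xb
    have hadd := hIterAdd m (fun y => d y xb) (hu0lip xb)
      ((shapley A B T)^[n] (fun y => d y xb) xb) xb
    show (shapley A B T)^[m + n] (fun y => d y xb) xb ≤
      (shapley A B T)^[m] (fun y => d y xb) xb + (shapley A B T)^[n] (fun y => d y xb) xb
    rw [he]
    calc (shapley A B T)^[m] ((shapley A B T)^[n] (fun y => d y xb)) xb ≤ _ := hmono
      _ = (shapley A B T)^[m] (fun y => d y xb) xb +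
          (shapley A B T)^[n] (fun y => d y xb) xb := hadd
  -- one-step lower bound at the base point
  have hSlow : ∀ w : X → ℝ, (∀ x y, w x - w y ≤ d x y) →
      w x0 - R x0 ≤ shapley A B T w x0 :=
    fun w hw => le_ciInf (hsupLB w hw x0)
  have hslow : ∀ k : ℕ, -((k : ℝ) * R x0) ≤ (shapley A B T)^[k] (fun y => d y x0) x0 := by
    intro k
    induction k with
    | zero => simp [hd0 x0]
    | succ k ih =>
      rw [Function.iterate_succ_apply']
      have h1 := hSlow ((shapley A B T)^[k] (fun y => d y x0)) (hulip x0 k)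
      push_cast
      linarith
  have hbddb : BddBelow (Set.range fun n : ℕ =>
      (shapley A B T)^[n] (fun y => d y x0) x0 / (n : ℝ)) := by
    refine ⟨-(R x0), ?_⟩
    rintro _ ⟨n, rfl⟩
    rcases Nat.eq_zero_or_pos n with hn | hn
    · subst hn; simp [hd0 x0, hR0 x0]
    · have hnp : (0 : ℝ) < (n : ℝ) := by exact_mod_cast hn
      rw [le_div_iff₀ hnp]
      have := hslow n
      linarith
  set ρ : ℝ := Subadditive.lim (hsubadd x0) with hρ
  have htend0 : Tendsto (fun n : ℕ => (shapley A B T)^[n] (fun y => d y x0) x0 / (n : ℝ))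
      atTop (nhds ρ) := (hsubadd x0).tendsto_lim hbddb
  have hkρ : ∀ k : ℕ, (k : ℝ) * ρ ≤ (shapley A B T)^[k] (fun y => d y x0) x0 := by
    intro k
    rcases Nat.eq_zero_or_pos k with hk | hk
    · subst hk; simp [hd0 x0]
    · have hkp : (0 : ℝ) < (k : ℝ) := by exact_mod_cast hk
      have h1 := (hsubadd x0).lim_le_div hbddb (Nat.pos_iff_ne_zero.1 hk)
      rw [le_div_iff₀ hkp] at h1
      linarith
  -- part 1 : limit for every base point
  have hpart1 : ∀ xb : X, Tendsto
      (fun k : ℕ => (shapley A B T)^[k] (fun y => d y xb) xb / (k : ℝ)) atTop (nhds ρ) := by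
    intro xb
    have hdir1 : ∀ k : ℕ, (shapley A B T)^[k] (fun y => d y xb) xb ≤
        (shapley A B T)^[k] (fun y => d y x0) x0 + (d xb x0 + d x0 xb) := by
      intro k
      have hptw : ∀ z : X, d z xb ≤ d z x0 + d x0 xb := fun z => htri z x0 xb
      have hrlip : ∀ x y : X, (d x x0 + d x0 xb) - (d y x0 + d x0 xb) ≤ d x y := by
        intro x y; have := hu0lip x0 x y; linarith
      have h1 := hIterMono k (fun y => d y xb) (fun z => d z x0 + d x0 xb)
        (hu0lip xb) hrlip hptw xb
      have h2 := hIterAdd k (fun y => d y x0) (hu0lip x0) (d x0 xb) xb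
      have h3 := huub x0 xb k
      rw [h2] at h1
      linarith
    have hdir2 : ∀ k : ℕ, (shapley A B T)^[k] (fun y => d y x0) x0 ≤
        (shapley A B T)^[k] (fun y => d y xb) xb + (d xb x0 + d x0 xb) := by
      intro k
      have hptw : ∀ z : X, d z x0 ≤ d z xb + d xb x0 := fun z => htri z xb x0
      have hrlip : ∀ x y : X, (d x xb + d xb x0) - (d y xb + d xb x0) ≤ d x y := by
        intro x y; have := hu0lip xb x y; linarith
      have h1 := hIterMono k (fun y => d y x0) (fun z => d z xb + d xb x0)
        (hu0lip x0) hrlip hptw x0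
      have h2 := hIterAdd k (fun y => d y xb) (hu0lip xb) (d xb x0) x0
      have h3 := huub xb x0 k
      rw [h2] at h1
      linarith
    have hdiff : Tendsto (fun k : ℕ => ((shapley A B T)^[k] (fun y => d y xb) xb -
        (shapley A B T)^[k] (fun y => d y x0) x0) / (k : ℝ)) atTop (nhds 0) := by
      refine squeeze_zero_norm (fun k => ?_)
        (tendsto_const_div_atTop_nhds_zero_nat (d xb x0 + d x0 xb))
      rcases Nat.eq_zero_or_pos k with hk | hk
      · subst hk; simp
      · have hkp : (0 : ℝ) < (k : ℝ) := by exact_mod_cast hk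
        rw [Real.norm_eq_abs, abs_div, abs_of_pos hkp]
        have habs' : |(shapley A B T)^[k] (fun y => d y xb) xb -
            (shapley A B T)^[k] (fun y => d y x0) x0| ≤ d xb x0 + d x0 xb := by
          rw [abs_le]
          constructor
          · have := hdir2 k; linarith
          · have := hdir1 k; linarith
        exact div_le_div_of_nonneg_right habs' hkp.le |>.trans_eq rfl
    have heq : (fun k : ℕ => (shapley A B T)^[k] (fun y => d y xb) xb / (k : ℝ)) =
        (fun k : ℕ => (shapley A B T)^[k] (fun y => d y x0) x0 / (k : ℝ) +
          ((shapley A B T)^[k] (fun y => d y xb) xb -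
            (shapley A B T)^[k] (fun y => d y x0) x0) / (k : ℝ)) := by
      funext k
      rw [← add_div]
      ring_nf
    rw [heq]
    simpa using htend0.add hdiff
  -- Collatz-Wielandt: every admissible l is at most ρ
  have hCWub : ∀ l : ℝ, (∃ v : X → ℝ, (∀ x y, v x - v y ≤ d x y) ∧
      ∀ x, l + v x ≤ shapley A B T v x) → l ≤ ρ := by
    rintro l ⟨v, hv, hsubl⟩
    have hstep : ∀ k : ℕ, ∀ x : X, (k : ℝ) * l + v x ≤ (shapley A B T)^[k] v x := by
      intro k
      induction k with
      | zero => intro x; simp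
      | succ k ih =>
        intro x
        rw [Function.iterate_succ_apply]
        have hlf : ∀ x y : X, (v x + l) - (v y + l) ≤ d x y := by
          intro x y; have := hv x y; linarith
        have h1 : ∀ z : X, (fun y => v y + l) z ≤ shapley A B T v z := by
          intro z
          show v z + l ≤ shapley A B T v z
          have := hsubl z; linarith
        have h2 := hIterMono k (fun y => v y + l) (shapley A B T v) hlf (hSlip v hv) h1 x
        have h3 := hIterAdd k v hv l x
        rw [h3] at h2
        have h4 := ih x
        push_cast
        linarith
    have hcomp2 : ∀ k : ℕ, (shapley A B T)^[k] v x0 ≤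
        (shapley A B T)^[k] (fun y => d y x0) x0 + v x0 := by
      intro k
      have hptw : ∀ z : X, v z ≤ d z x0 + v x0 := by
        intro z; have := hv z x0; linarith
      have hrlip : ∀ x y : X, (d x x0 + v x0) - (d y x0 + v x0) ≤ d x y := by
        intro x y; have := hu0lip x0 x y; linarith
      have h1 := hIterMono k v (fun z => d z x0 + v x0) hv hrlip hptw x0
      have h2 := hIterAdd k (fun y => d y x0) (hu0lip x0) (v x0) x0
      rw [h2] at h1
      exact h1
    refine ge_of_tendsto htend0 (eventually_atTop.2 ⟨1, fun k hk => ?_⟩)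
    have hkp : (0 : ℝ) < (k : ℝ) := by exact_mod_cast hk
    rw [le_div_iff₀ hkp]
    have h1 := hstep k x0
    have h2 := hcomp2 k
    linarith
  -- normalizing sequences
  set us : ℕ → X → ℝ := fun k => (shapley A B T)^[k] (fun y => d y x0) with hus
  set gs : ℕ → ℝ := fun k => us k x0 - k * ρ with hgs
  have hg0 : ∀ k, 0 ≤ gs k := by
    intro k
    have := hkρ k
    simp only [hgs]
    linarith
  obtain ⟨σ, hσ⟩ := Stmt3Aux.freq_ge_M gs hg0
  set cs : ℕ → ℝ := fun k => k * ρ + Stmt3Aux.Mseq gs k with hcs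
  have hcmono : ∀ k : ℕ, ρ ≤ cs (k + 1) - cs k := by
    intro k
    have h1 : Stmt3Aux.Mseq gs k ≤ Stmt3Aux.Mseq gs (k + 1) :=
      Stmt3Aux.Mseq_mono gs (Nat.le_succ k)
    simp only [hcs]
    push_cast
    linarith
  have hscs : ∀ k : ℕ, us k x0 - cs k = gs k - Stmt3Aux.Mseq gs k := by
    intro k
    simp only [hcs, hgs]
    ring
  have hgM_le : ∀ k, gs k - Stmt3Aux.Mseq gs k ≤ 0 := by
    intro k
    have := Stmt3Aux.le_Mseq gs (le_refl k)
    linarith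
  -- the candidate eigenfunction
  have hflip : ∀ k : ℕ, ∀ x y : X, (us k x - cs k) - (us k y - cs k) ≤ d x y := by
    intro k x y
    have := hulip x0 k x y
    simp only [hus]
    linarith
  have hfub : ∀ (k : ℕ) (z : X), us k z - cs k ≤ d z x0 := by
    intro k z
    have h1 := huub x0 z k
    have h2 := hgM_le k
    have h3 := hscs k
    simp only [hus] at *
    linarith
  have hflb : ∀ (k : ℕ) (z : X), (gs k - Stmt3Aux.Mseq gs k) - d x0 z ≤ us k z - cs k := by
    intro k z
    have h1 := hulb x0 z k
    have h3 := hscs k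
    simp only [hus] at *
    linarith
  have hffreq : ∀ z : X, ∃ᶠ k in atTop, σ - d x0 z ≤ us k z - cs k := by
    intro z
    refine hσ.mono fun k hk => ?_
    have := hflb k z
    linarith
  set vv : X → ℝ := fun z => Stmt3Aux.L (fun k => us k z - cs k) with hvv
  have hvvlip : ∀ x y : X, vv x - vv y ≤ d x y := by
    intro x y
    have h1 : Stmt3Aux.L (fun k => us k x - cs k) ≤
        Stmt3Aux.L (fun k => (us k y - cs k) + d x y) := by
      refine Stmt3Aux.L_mono (Cu := d y x0 + d x y) (hffreq x) ?_ (fun k => ?_)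
      · exact Eventually.of_forall fun k => add_le_add_left (hfub k y) (d x y)
      · have := hflip k x y; linarith
    have h2 : Stmt3Aux.L (fun k => (us k y - cs k) + d x y) =
        Stmt3Aux.L (fun k => us k y - cs k) + d x y :=
      Stmt3Aux.L_add_const (hffreq y) (Eventually.of_forall fun k => hfub k y) (d x y)
    simp only [hvv]
    linarith
  -- distance bounds on one-step reachable points
  have hdub : ∀ (x : X) (a : ↥A) (b : ↥B), d (T a b x) x0 ≤ R x := by
    intro x a b
    refine (hdd _ _).trans ?_
    rw [dist_comm]
    exact hRb x a a.2 b b.2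
  have hdlb : ∀ (x : X) (a : ↥A) (b : ↥B), d x0 (T a b x) ≤ R x := by
    intro x a b
    exact (hdd _ _).trans (hRb x a a.2 b b.2)
  -- key exchange lemma
  have hkey : ∀ (x : X) (a : ↥A),
      Stmt3Aux.L (fun k => ⨆ b : ↥B, (us k (T a b x) - cs k)) ≤ ⨆ b : ↥B, vv (T a b x) := by
    intro x a
    have hub_h : ∀ k, (⨆ b : ↥B, (us k (T a b x) - cs k)) ≤ R x :=
      fun k => ciSup_le fun b => (hfub k _).trans (hdub x a b)
    have hlb_h : ∃ᶠ k in atTop, σ - R x ≤ ⨆ b : ↥B, (us k (T a b x) - cs k) := by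
      refine hσ.mono fun k hk => ?_
      have h1 : σ - R x ≤ us k (T a (⟨b0, hb0⟩ : ↥B) x) - cs k := by
        have h2 := hflb k (T a (⟨b0, hb0⟩ : ↥B) x)
        have h3 := hdlb x a ⟨b0, hb0⟩
        linarith
      exact h1.trans (le_ciSup (hbA _ (hflip k) x a) ⟨b0, hb0⟩)
    by_contra hcon
    push_neg at hcon
    set γ := Stmt3Aux.L (fun k => ⨆ b : ↥B, (us k (T a b x) - cs k)) with hγ
    set W := ⨆ b : ↥B, vv (T a b x) with hW
    set ε := (γ - W) / 3 with hε
    have hεpos : 0 < ε := by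
      simp only [hε]
      linarith
    have hfr : ∃ᶠ k in atTop, γ - ε ≤ ⨆ b : ↥B, (us k (T a b x) - cs k) := by
      by_contra hq
      rw [Filter.not_frequently] at hq
      have hev : ∀ᶠ k in atTop, (⨆ b : ↥B, (us k (T a b x) - cs k)) ≤ γ - ε :=
        hq.mono fun k hk => (not_le.1 hk).le
      have hLle := Stmt3Aux.L_le hlb_h hev
      rw [← hγ] at hLle
      linarith
    have hmaxex : ∀ k : ℕ, ∃ b, b ∈ B ∧
        ∀ b' ∈ B, us k (T a b' x) - cs k ≤ us k (T a b x) - cs k := by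
      intro k
      have hcont : ContinuousOn (fun b => us k (T a b x) - cs k) B :=
        (hlipW (fun z => us k z - cs k) (hflip k)).comp_continuousOn (hcontb x a a.2)
      obtain ⟨bmx, hbmB, hbmax⟩ := hBc.exists_isMaxOn hBne hcont
      exact ⟨bmx, hbmB, fun b' hb' => hbmax hb'⟩
    choose bm hbmB hbmax using hmaxex
    obtain ⟨φ, hφ, hφP⟩ := Filter.extraction_of_frequently_atTop hfr
    obtain ⟨bst, hbstB, ψ, hψ, hψt⟩ := hBc.tendsto_subseq (fun n => hbmB (φ n))
    have hco : ContinuousWithinAt (fun b => T a b x) B bst := hcontb x a a.2 bst hbstB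
    have htt : Tendsto (fun n => T a (bm (φ (ψ n))) x) atTop (nhds (T a bst x)) := by
      exact hco.tendsto.comp
        (tendsto_nhdsWithin_of_tendsto_nhds_of_eventually_within _ hψt
          (Eventually.of_forall fun n => hbmB _))
    have hfreq2 : ∃ᶠ k in atTop, γ - 2*ε ≤ us k (T a bst x) - cs k := by
      rw [frequently_atTop]
      intro N
      have hev : ∀ᶠ n in atTop, dist (T a (bm (φ (ψ n))) x) (T a bst x) < ε :=
        Metric.tendsto_nhds.1 htt ε hεpos
      obtain ⟨n, hn1, hn2⟩ := (hev.and (eventually_ge_atTop N)).exists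
      refine ⟨φ (ψ n), ?_, ?_⟩
      · calc N ≤ n := hn2
          _ ≤ ψ n := hψ.le_apply
          _ ≤ φ (ψ n) := hφ.le_apply
      · have h1 : γ - ε ≤ ⨆ b : ↥B, (us (φ (ψ n)) (T a b x) - cs (φ (ψ n))) := hφP (ψ n)
        have h2 : (⨆ b : ↥B, (us (φ (ψ n)) (T a b x) - cs (φ (ψ n)))) ≤
            us (φ (ψ n)) (T a (⟨bm (φ (ψ n)), hbmB _⟩ : ↥B) x) - cs (φ (ψ n)) :=
          ciSup_le fun b => hbmax (φ (ψ n)) b b.2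
        have h3 : (us (φ (ψ n)) (T a (bm (φ (ψ n))) x) - cs (φ (ψ n))) -
            (us (φ (ψ n)) (T a bst x) - cs (φ (ψ n))) ≤
            dist (T a (bm (φ (ψ n))) x) (T a bst x) :=
          (hflip (φ (ψ n)) _ _).trans (hdd _ _)
        have h4 := hn1
        simp only [] at h2
        linarith
    have h5 : γ - 2*ε ≤ vv (T a bst x) := by
      simp only [hvv]
      exact Stmt3Aux.le_L (Eventually.of_forall fun k => hfub k (T a bst x)) hfreq2
    have h6 : vv (T a bst x) ≤ W := by
      rw [hW]
      exact le_ciSup (hbA vv hvvlip x a) ⟨bst, hbstB⟩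
    have : γ ≤ W + 2*ε := by linarith
    simp only [hε] at this
    linarith
  -- one step of the Shapley operator on the normalized functions
  have hSf : ∀ (k : ℕ) (x : X),
      shapley A B T (fun z => us k z - cs k) x = us (k+1) x - cs k := by
    intro k x
    have h1 : (fun z : X => us k z - cs k) = fun z => us k z + (-(cs k)) :=
      funext fun z => by ring
    rw [h1, hSadd (us k) (hulip x0 k) (-(cs k)) x]
    have h2 : shapley A B T (us k) x = us (k+1) x := by
      simp only [hus]
      rw [Function.iterate_succ_apply']
    rw [h2]
    ring
  have hSfub : ∀ (k : ℕ) (x : X), shapley A B T (fun z => us k z - cs k) x ≤ R x := by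
    intro k x
    refine (hSle _ (hflip k) x ⟨a0, ha0⟩).trans (ciSup_le fun b => ?_)
    exact (hfub k _).trans (hdub x ⟨a0, ha0⟩ b)
  have hSfge : ∀ (k : ℕ) (x : X),
      (us (k+1) x - cs (k+1)) + ρ ≤ shapley A B T (fun z => us k z - cs k) x := by
    intro k x
    rw [hSf k x]
    have := hcmono k
    linarith
  have hmem : ∀ x : X, ρ + vv x ≤ shapley A B T vv x := by
    intro x
    have hfrs : ∃ᶠ k in atTop, σ - d x0 x ≤ us (k+1) x - cs (k+1) :=
      Stmt3Aux.freq_shift (hffreq x)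
    have hlbS : ∃ᶠ k in atTop,
        (σ - d x0 x) + ρ ≤ shapley A B T (fun z => us k z - cs k) x := by
      refine hfrs.mono fun k hk => ?_
      have := hSfge k x
      linarith
    have h1 : Stmt3Aux.L (fun k => shapley A B T (fun z => us k z - cs k) x) ≤
        shapley A B T vv x := by
      show Stmt3Aux.L (fun k => shapley A B T (fun z => us k z - cs k) x) ≤
        ⨅ a : ↥A, ⨆ b : ↥B, vv (T a b x)
      refine le_ciInf fun a => ?_
      refine (Stmt3Aux.L_mono (Cl := (σ - d x0 x) + ρ) (Cu := R x) hlbS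
        (Eventually.of_forall fun k => ciSup_le fun b => (hfub k _).trans (hdub x a b))
        (fun k => hSle _ (hflip k) x a)).trans (hkey x a)
    have h2 : Stmt3Aux.L (fun k => (us (k+1) x - cs (k+1)) + ρ) ≤
        Stmt3Aux.L (fun k => shapley A B T (fun z => us k z - cs k) x) := by
      refine Stmt3Aux.L_mono (Cl := (σ - d x0 x) + ρ) (Cu := R x) ?_
        (Eventually.of_forall fun k => hSfub k x) (fun k => hSfge k x)
      exact hfrs.mono fun k hk => by linarith
    have h3 : Stmt3Aux.L (fun k => (us (k+1) x - cs (k+1)) + ρ) =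
        Stmt3Aux.L (fun k => us (k+1) x - cs (k+1)) + ρ :=
      Stmt3Aux.L_add_const (Cl := σ - d x0 x) hfrs
        (Eventually.of_forall fun k => hfub (k+1) x) ρ
    have h4 : Stmt3Aux.L (fun k => us (k+1) x - cs (k+1)) = vv x := by
      simp only [hvv]
      exact Stmt3Aux.L_shift (fun k => us k x - cs k)
    linarith [h1, h2]
  exact ⟨ρ, hpart1, ⟨⟨vv, hvvlip, hmem⟩, fun l hl => hCWub l hl⟩⟩
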